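/- Let m ≥ 1 and K a field of characteristic 0. In the algebra UT2(G) of 2×2 upper triangular matrices over the infinite-dimensional Grassmann algebra G, consider any elements ξ_1,…,ξ_{2m+1} (so any (2m+1)-generated subalgebra). Then the subalgebra they generate satisfies the identity [x1,x2,x3][x4,x5]⋯[x_{2m+4},x_{2m+5}] = 0; concretely, for any elements a_1,…,a_{2m+5} of the subalgebra generated by ξ_1,…,ξ_{2m+1}, the product [a1,a2,a3][a4,a5]⋯[a_{2m+4},a_{2m+5}] is 0. -/

import Mathlib

/-- Commutator `[a,b] = ab - ba`. -/
def br {R : Type*} [Ring R] (a b : R) : R := a * b - b * a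

/-- Left-normed triple commutator `[a,b,c] = [[a,b],c]`. -/
def tr {R : Type*} [Ring R] (a b c : R) : R := br (br a b) c

namespace Stmt16Aux

open CliffordAlgebra

variable {K V : Type*} [Field K] [CharZero K] [AddCommGroup V] [Module K V]

local notation "Q0" => (0 : QuadraticForm K V)
local notation "G" => ExteriorAlgebra K V

lemma isq (x : V) : ι Q0 x * ι Q0 x = 0 := by
  rw [ι_sq_scalar]; simp

lemma hsw (x y : V) : ι Q0 x * ι Q0 y = -(ι Q0 y * ι Q0 x) := by
  have h := isq (K := K) (x + y)
  rw [map_add, mul_add, add_mul, add_mul, isq, isq, zero_add, add_zero] at h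
  exact eq_neg_of_add_eq_zero_right h

lemma hsw' (x y : V) (t : G) : ι Q0 x * (ι Q0 y * t) = -(ι Q0 y * (ι Q0 x * t)) := by
  rw [← mul_assoc, hsw, neg_mul, mul_assoc]

lemma iota_mul_even {x : G} (hx : x ∈ evenOdd Q0 0) (m : V) :
    ι Q0 m * x = x * ι Q0 m := by
  induction x, hx using even_induction with
  | algebraMap r => exact (Algebra.commutes r _).symm
  | add a b ha hb iha ihb => rw [mul_add, add_mul, iha, ihb]
  | ι_mul_ι_mul m₁ m₂ x hx ih =>
    simp only [mul_assoc]
    rw [hsw' m m₁, hsw' m m₂, mul_neg, neg_neg, ih]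

lemma iota_mul_odd {x : G} (hx : x ∈ evenOdd Q0 1) (m : V) :
    ι Q0 m * x = -(x * ι Q0 m) := by
  induction x, hx using odd_induction with
  | ι v => exact hsw m v
  | add a b ha hb iha ihb => rw [mul_add, iha, ihb, add_mul, neg_add]
  | ι_mul_ι_mul m₁ m₂ x hx ih =>
    simp only [mul_assoc]
    rw [hsw' m m₁, hsw' m m₂, mul_neg, neg_neg, ih, mul_neg, mul_neg]

lemma even_swap {y : G} (hy : y ∈ evenOdd Q0 0) (m : V) (t : G) :
    ι Q0 m * (y * t) = y * (ι Q0 m * t) := by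
  rw [← mul_assoc, iota_mul_even hy, mul_assoc]

lemma odd_swap {y : G} (hy : y ∈ evenOdd Q0 1) (m : V) (t : G) :
    ι Q0 m * (y * t) = -(y * (ι Q0 m * t)) := by
  rw [← mul_assoc, iota_mul_odd hy, neg_mul, mul_assoc]

lemma exists_even_odd (x : G) :
    ∃ x0 x1, x0 ∈ evenOdd Q0 0 ∧ x1 ∈ evenOdd Q0 1 ∧ x = x0 + x1 := by
  have h : (evenOdd Q0 0) ⊔ (evenOdd Q0 1) = ⊤ :=
    (evenOdd_isCompl (Q := Q0)).codisjoint.eq_top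
  have hx : x ∈ (evenOdd Q0 0) ⊔ (evenOdd Q0 1) := h ▸ Submodule.mem_top
  obtain ⟨x0, h0, x1, h1, hsum⟩ := Submodule.mem_sup.mp hx
  exact ⟨x0, x1, h0, h1, hsum.symm⟩

lemma even_central {x : G} (hx : x ∈ evenOdd Q0 0) : ∀ y, x * y = y * x := by
  induction x, hx using even_induction with
  | algebraMap r => exact fun y => Algebra.commutes r y
  | add a b ha hb iha ihb => intro y; rw [add_mul, mul_add, iha, ihb]
  | ι_mul_ι_mul m₁ m₂ x hx ih =>
    intro y
    obtain ⟨y0, y1, hy0, hy1, rfl⟩ := exists_even_odd y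
    simp only [mul_add, add_mul]
    congr 1
    · simp only [mul_assoc]
      rw [ih y0, even_swap hy0, even_swap hy0]
    · simp only [mul_assoc]
      rw [ih y1, odd_swap hy1, mul_neg, odd_swap hy1, neg_neg]

lemma odd_anticomm {x y : G} (hx : x ∈ evenOdd Q0 1) (hy : y ∈ evenOdd Q0 1) :
    x * y = -(y * x) := by
  induction x, hx using odd_induction with
  | ι v => exact iota_mul_odd hy v
  | add a b ha hb iha ihb => rw [add_mul, iha, ihb, mul_add, neg_add]
  | ι_mul_ι_mul m₁ m₂ x hx ih =>
    simp only [mul_assoc]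
    rw [ih, mul_neg, mul_neg, odd_swap hy, mul_neg, odd_swap hy, neg_neg]

lemma odd_sq_zero {x : G} (hx : x ∈ evenOdd Q0 1) : x * x = 0 := by
  have h := odd_anticomm hx hx
  have h2 : (2 : K) • (x * x) = 0 := by
    rw [two_smul]
    nth_rewrite 2 [h]
    exact add_neg_cancel _
  rcases smul_eq_zero.mp h2 with h3 | h3
  · exact absurd h3 two_ne_zero
  · exact h3

lemma odd_mul_odd_even {x y : G} (hx : x ∈ evenOdd Q0 1) (hy : y ∈ evenOdd Q0 1) :
    x * y ∈ evenOdd Q0 0 := by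
  have := SetLike.mul_mem_graded hx hy
  rwa [show ((1 : ZMod 2) + 1) = 0 from rfl] at this

lemma br_central (x y : G) : ∀ t, br x y * t = t * br x y := by
  obtain ⟨x0, x1, hx0, hx1, rfl⟩ := exists_even_odd x
  obtain ⟨y0, y1, hy0, hy1, rfl⟩ := exists_even_odd y
  have key : br (x0 + x1) (y0 + y1) = x1 * y1 + x1 * y1 := by
    show (x0 + x1) * (y0 + y1) - (y0 + y1) * (x0 + x1) = _
    rw [mul_add, add_mul, add_mul, mul_add, add_mul, add_mul]
    rw [even_central hy0 x0, even_central hy0 x1, ← even_central hx0 y1,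
      odd_anticomm hy1 hx1]
    abel
  rw [key]
  exact even_central (Submodule.add_mem _ (odd_mul_odd_even hx1 hy1)
    (odd_mul_odd_even hx1 hy1))

lemma tr_zero (x y z : G) : tr x y z = 0 := by
  show br x y * z - z * br x y = 0
  rw [br_central x y z, sub_self]

section Odd

variable {n : ℕ} (o : Fin n → ExteriorAlgebra K V)

def Pgen : Set (ExteriorAlgebra K V) :=
  {x | ∃ (c : ExteriorAlgebra K V) (j : Fin n), (∀ t, c * t = t * c) ∧ x = c * o j}

def Psub : Submodule K (ExteriorAlgebra K V) := Submodule.span K (Pgen o)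

lemma cent_mul {x y : G} (hx : ∀ t, x * t = t * x) (hy : ∀ t, y * t = t * y) :
    ∀ t, (x * y) * t = t * (x * y) := fun t => by
  rw [mul_assoc, hy t, ← mul_assoc, hx t, mul_assoc]

lemma cent_list : ∀ (l : List G), (∀ x ∈ l, ∀ t, x * t = t * x) →
    ∀ t, l.prod * t = t * l.prod
  | [], _ => fun t => by rw [List.prod_nil, one_mul, mul_one]
  | (x :: l), h => fun t => by
    rw [List.prod_cons]
    exact cent_mul (h x (List.mem_cons_self))
      (cent_list l fun y hy => h y (List.mem_cons_of_mem x hy)) t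

lemma prod_pull : ∀ (l : List (G × Fin n)), (∀ p ∈ l, ∀ t, p.1 * t = t * p.1) →
    (l.map fun p => p.1 * o p.2).prod =
      (l.map Prod.fst).prod * (l.map fun p => o p.2).prod
  | [], _ => by simp
  | (p :: l), h => by
    have hC := cent_list (l.map Prod.fst) (by
      intro x hx
      obtain ⟨q, hq, rfl⟩ := List.mem_map.mp hx
      exact h q (List.mem_cons_of_mem p hq))
    rw [List.map_cons, List.prod_cons, List.map_cons, List.prod_cons, List.map_cons,
      List.prod_cons, prod_pull l (fun q hq => h q (List.mem_cons_of_mem p hq))]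
    simp only [mul_assoc]
    rw [← mul_assoc (o p.2), ← hC (o p.2), mul_assoc]
  termination_by l => l.length

lemma cent_mulP {c p : G} (hc : ∀ t, c * t = t * c) (hp : p ∈ Psub (K := K) o) :
    c * p ∈ Psub (K := K) o := by
  induction hp using Submodule.span_induction with
  | mem x hx =>
    obtain ⟨c', jj, hc', rfl⟩ := hx
    exact Submodule.subset_span ⟨c * c', jj, cent_mul hc hc', (mul_assoc _ _ _).symm⟩
  | zero => rw [mul_zero]; exact Submodule.zero_mem _
  | add x y hx hy ihx ihy => rw [mul_add]; exact Submodule.add_mem _ ihx ihy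
  | smul a x hx ihx => rw [mul_smul_comm]; exact Submodule.smul_mem _ a ihx

variable (ho : ∀ j, o j ∈ CliffordAlgebra.evenOdd (0 : QuadraticForm K V) 1)

include ho

lemma oo_swap (i a : Fin n) (s : G) : o i * (o a * s) = -(o a * (o i * s)) := by
  rw [← mul_assoc, odd_anticomm (ho i) (ho a), neg_mul, mul_assoc]

lemma sandwich (i : Fin n) : ∀ (l : List (Fin n)) (t : G),
    o i * ((l.map o).prod * (o i * t)) = 0
  | [], t => by
    rw [List.map_nil, List.prod_nil, one_mul, ← mul_assoc, odd_sq_zero (ho i), zero_mul]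
  | (a :: l), t => by
    rw [List.map_cons, List.prod_cons, mul_assoc, oo_swap o ho, sandwich i l t,
      mul_zero, neg_zero]

lemma word_zero : ∀ (l : List (Fin n)), ¬ l.Nodup → (l.map o).prod = 0 := by
  intro l
  induction l with
  | nil => intro h; exact absurd List.nodup_nil h
  | cons i t ih =>
    intro h
    by_cases hit : i ∈ t
    · obtain ⟨s₁, s₂, rfl⟩ := List.append_of_mem hit
      rw [List.map_cons, List.prod_cons, List.map_append, List.prod_append,
        List.map_cons, List.prod_cons]
      exact sandwich o ho i s₁ _
    · have hnd : ¬ t.Nodup := fun hnd => h (List.nodup_cons.mpr ⟨hit, hnd⟩)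
      rw [List.map_cons, List.prod_cons, ih hnd, mul_zero]

lemma Ppow_bot : (Psub (K := K) o) ^ (n + 1) = ⊥ := by
  rw [Psub, Submodule.span_pow]
  refine le_bot_iff.mp (Submodule.span_le.mpr ?_)
  intro x hx
  obtain ⟨f, rfl⟩ := Set.mem_pow.mp hx
  have hf : ∀ i, ∃ c jj, (∀ t, c * t = t * c) ∧ (f i : G) = c * o jj := fun i => (f i).2
  choose c j hc hx using hf
  simp only [SetLike.mem_coe, Submodule.mem_bot, hx]
  have h1 : (List.ofFn fun i => (c i * o (j i) : G)) =
      (List.ofFn fun i => ((c i, j i) : G × Fin n)).map (fun p => p.1 * o p.2) := by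
    rw [List.map_ofFn]; rfl
  have h2 : ((List.ofFn fun i => ((c i, j i) : G × Fin n)).map fun p => o p.2) =
      (List.ofFn j).map o := by
    rw [List.map_ofFn, List.map_ofFn]; rfl
  have hnj : ¬ (List.ofFn j).Nodup := by
    rw [List.nodup_ofFn]
    intro hinj
    have := Fintype.card_le_of_injective j hinj
    simp at this
  have hmem : ∀ p ∈ (List.ofFn fun i => ((c i, j i) : G × Fin n)), ∀ t, p.1 * t = t * p.1 := by
    intro p hp
    obtain ⟨i, hi⟩ := List.mem_ofFn.mp hp
    rw [← hi]
    exact hc i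
  rw [h1, prod_pull o _ hmem, h2, word_zero o ho _ hnj, mul_zero]

lemma P_anti {p q : G} (hp : p ∈ Psub (K := K) o) (hq : q ∈ Psub (K := K) o) :
    p * q = -(q * p) := by
  induction hp, hq using Submodule.span_induction₂ with
  | mem_mem x y hx hy =>
    obtain ⟨c, i, hc, rfl⟩ := hx
    obtain ⟨c', jj, hc', rfl⟩ := hy
    have h1 : o i * (c' * o jj) = c' * (o i * o jj) := by
      rw [← mul_assoc, ← hc' (o i), mul_assoc]
    have h2 : o jj * (c * o i) = c * (o jj * o i) := by
      rw [← mul_assoc, ← hc (o jj), mul_assoc]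
    have hL : (c * o i) * (c' * o jj) = (c * c') * (o i * o jj) := by
      rw [mul_assoc, h1, ← mul_assoc]
    have hR : (c' * o jj) * (c * o i) = (c * c') * (o jj * o i) := by
      rw [mul_assoc, h2, ← mul_assoc, hc' c]
    rw [hL, hR, odd_anticomm (ho jj) (ho i), mul_neg, neg_neg]
  | zero_left y hy => rw [zero_mul, mul_zero, neg_zero]
  | zero_right x hx => rw [zero_mul, mul_zero, neg_zero]
  | add_left x y z hx hy hz ih1 ih2 => rw [add_mul, ih1, ih2, mul_add, neg_add]
  | add_right x y z hx hy hz ih1 ih2 => rw [mul_add, ih1, ih2, add_mul, neg_add]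
  | smul_left r x y hx hy ih => rw [smul_mul_assoc, ih, mul_smul_comm, smul_neg]
  | smul_right r x y hx hy ih => rw [mul_smul_comm, ih, smul_mul_assoc, smul_neg]

lemma PP_central {p q : G} (hp : p ∈ Psub (K := K) o) (hq : q ∈ Psub (K := K) o) :
    ∀ t, (p * q) * t = t * (p * q) := by
  induction hp, hq using Submodule.span_induction₂ with
  | mem_mem x y hx hy =>
    obtain ⟨c, i, hc, rfl⟩ := hx
    obtain ⟨c', jj, hc', rfl⟩ := hy
    have h1 : o i * (c' * o jj) = c' * (o i * o jj) := by
      rw [← mul_assoc, ← hc' (o i), mul_assoc]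
    have hL : (c * o i) * (c' * o jj) = (c * c') * (o i * o jj) := by
      rw [mul_assoc, h1, ← mul_assoc]
    intro t
    rw [hL]
    exact cent_mul (cent_mul hc hc') (even_central (odd_mul_odd_even (ho i) (ho jj))) t
  | zero_left y hy => intro t; rw [zero_mul, zero_mul, mul_zero]
  | zero_right x hx => intro t; rw [mul_zero, zero_mul, mul_zero]
  | add_left x y z hx hy hz ih1 ih2 =>
    intro t; rw [add_mul, add_mul, ih1, ih2, mul_add]
  | add_right x y z hx hy hz ih1 ih2 =>
    intro t; rw [mul_add, add_mul, ih1, ih2, mul_add]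
  | smul_left r x y hx hy ih =>
    intro t; rw [smul_mul_assoc, smul_mul_assoc, ih, mul_smul_comm]
  | smul_right r x y hx hy ih =>
    intro t; rw [mul_smul_comm, smul_mul_assoc, ih, mul_smul_comm]

lemma adjoin_struct (y e : Fin n → G) (hoe : ∀ j, y j = e j + o j)
    (he : ∀ j, e j ∈ evenOdd Q0 0) :
    ∀ x ∈ Algebra.adjoin K (Set.range y),
      ∃ cc p, (∀ t, cc * t = t * cc) ∧ p ∈ Psub (K := K) o ∧ x = cc + p := by
  intro x hx
  induction hx using Algebra.adjoin_induction with
  | mem z hz =>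
    obtain ⟨jj, rfl⟩ := hz
    exact ⟨e jj, o jj, fun t => even_central (he jj) t,
      Submodule.subset_span ⟨1, jj, fun t => by rw [one_mul, mul_one], (one_mul _).symm⟩,
      hoe jj⟩
  | algebraMap r =>
    exact ⟨algebraMap K G r, 0, fun t => Algebra.commutes r t,
      Submodule.zero_mem _, (add_zero _).symm⟩
  | add u v hu hv ihu ihv =>
    obtain ⟨cu, pu, hcu, hpu, rfl⟩ := ihu
    obtain ⟨cv, pv, hcv, hpv, rfl⟩ := ihv
    exact ⟨cu + cv, pu + pv, fun t => by rw [add_mul, mul_add, hcu, hcv],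
      Submodule.add_mem _ hpu hpv, by abel⟩
  | mul u v hu hv ihu ihv =>
    obtain ⟨cu, pu, hcu, hpu, rfl⟩ := ihu
    obtain ⟨cv, pv, hcv, hpv, rfl⟩ := ihv
    refine ⟨cu * cv + pu * pv, cu * pv + pu * cv, ?_, ?_, ?_⟩
    · intro t
      rw [add_mul, mul_add, cent_mul hcu hcv t, PP_central o ho hpu hpv t]
    · refine Submodule.add_mem _ (cent_mulP o hcu hpv) ?_
      rw [← hcv pu]
      exact cent_mulP o hcv hpu
    · rw [add_mul, mul_add, mul_add]
      abel

end Odd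

lemma list_prod_mem_pow {R A : Type*} [CommSemiring R] [Semiring A] [Algebra R A]
    (Q : Submodule R A) :
    ∀ (l : List A), (∀ x ∈ l, x ∈ Q) → l.prod ∈ Q ^ l.length
  | [], _ => by
    rw [List.prod_nil, List.length_nil, pow_zero]
    exact Submodule.one_le.mp le_rfl
  | (x :: l), h => by
    rw [List.prod_cons, List.length_cons, pow_succ']
    exact Submodule.mul_mem_mul (h x (List.mem_cons_self))
      (list_prod_mem_pow Q l fun y hy => h y (List.mem_cons_of_mem x hy))

section Mat

variable {A : Type*} [Ring A]

lemma m10 {M N : Matrix (Fin 2) (Fin 2) A} (hM : M 1 0 = 0) (hN : N 1 0 = 0) :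
    (M * N) 1 0 = 0 := by
  rw [Matrix.mul_apply, Fin.sum_univ_two, hM, hN, zero_mul, mul_zero, add_zero]

lemma m11 {M N : Matrix (Fin 2) (Fin 2) A} (hM : M 1 0 = 0) :
    (M * N) 1 1 = M 1 1 * N 1 1 := by
  rw [Matrix.mul_apply, Fin.sum_univ_two, hM, zero_mul, zero_add]

lemma m00 {M N : Matrix (Fin 2) (Fin 2) A} (hN : N 1 0 = 0) :
    (M * N) 0 0 = M 0 0 * N 0 0 := by
  rw [Matrix.mul_apply, Fin.sum_univ_two, hN, mul_zero, add_zero]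

lemma br10 {M N : Matrix (Fin 2) (Fin 2) A} (hM : M 1 0 = 0) (hN : N 1 0 = 0) :
    br M N 1 0 = 0 := by
  show (M * N - N * M) 1 0 = 0
  rw [Matrix.sub_apply, m10 hM hN, m10 hN hM, sub_self]

lemma br11 {M N : Matrix (Fin 2) (Fin 2) A} (hM : M 1 0 = 0) (hN : N 1 0 = 0) :
    br M N 1 1 = br (M 1 1) (N 1 1) := by
  show (M * N - N * M) 1 1 = M 1 1 * N 1 1 - N 1 1 * M 1 1
  rw [Matrix.sub_apply, m11 hM, m11 hN]

lemma br00 {M N : Matrix (Fin 2) (Fin 2) A} (hM : M 1 0 = 0) (hN : N 1 0 = 0) :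
    br M N 0 0 = br (M 0 0) (N 0 0) := by
  show (M * N - N * M) 0 0 = M 0 0 * N 0 0 - N 0 0 * M 0 0
  rw [Matrix.sub_apply, m00 hN, m00 hM]

lemma matrix_list_prod {R : Type*} [CommSemiring R] [Algebra R A] (Q : Submodule R A) :
    ∀ (l : List (Matrix (Fin 2) (Fin 2) A)), (∀ M ∈ l, M 1 0 = 0 ∧ M 1 1 ∈ Q) →
      l.prod 1 0 = 0 ∧ l.prod 1 1 ∈ Q ^ l.length
  | [], _ => ⟨by rw [List.prod_nil]; exact Matrix.one_apply_ne (by decide), by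
      rw [List.length_nil, pow_zero, List.prod_nil, Matrix.one_apply_eq]
      exact Submodule.one_le.mp le_rfl⟩
  | (M :: l), h => by
    have hM := h M (List.mem_cons_self)
    have ih := matrix_list_prod Q l (fun N hN => h N (List.mem_cons_of_mem M hN))
    rw [List.prod_cons, List.length_cons]
    exact ⟨m10 hM.1 ih.1, by
      rw [m11 hM.1, pow_succ']
      exact Submodule.mul_mem_mul hM.2 ih.2⟩

end Mat

end Stmt16Aux

/-- Let `G` be the Grassmann algebra of an infinite-dimensional vector space over a field of
characteristic zero and `m ≥ 1`.  Any subalgebra of `UT2(G)` generated by `2m+1` elements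
satisfies `[x1,x2,x3][x4,x5]⋯[x_{2m+4},x_{2m+5}] = 0`. -/
theorem stmt16 {K V : Type*} [Field K] [CharZero K] [AddCommGroup V] [Module K V]
    (hV : ¬ Module.Finite K V) (m : ℕ) (hm : 1 ≤ m)
    (ξ : Fin (2 * m + 1) → Matrix (Fin 2) (Fin 2) (ExteriorAlgebra K V))
    (hξ : ∀ i, ξ i 1 0 = 0)
    (a : ℕ → Matrix (Fin 2) (Fin 2) (ExteriorAlgebra K V))
    (ha : ∀ i, a i ∈ Algebra.adjoin K (Set.range ξ)) :
    tr (a 0) (a 1) (a 2) *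
      (List.ofFn (fun i : Fin (m + 1) => br (a (2 * i + 3)) (a (2 * i + 4)))).prod = 0 := by
  classical
  open Stmt16Aux in
  set y : Fin (2 * m + 1) → ExteriorAlgebra K V := fun j => ξ j 1 1 with hy
  choose e od he hod hdec using fun j => Stmt16Aux.exists_even_odd (K := K) (y j)
  set P : Submodule K (ExteriorAlgebra K V) := Stmt16Aux.Psub od with hP
  -- upper triangularity and diagonal membership of elements of the adjoin
  have key : ∀ (M : Matrix (Fin 2) (Fin 2) (ExteriorAlgebra K V)), M ∈ Algebra.adjoin K (Set.range ξ) →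
      (M 1 0 = 0 ∧ M 1 1 ∈ Algebra.adjoin K (Set.range y)) := by
    intro M hM
    induction hM using Algebra.adjoin_induction with
    | mem x hx =>
      obtain ⟨j, rfl⟩ := hx
      exact ⟨hξ j, Algebra.subset_adjoin ⟨j, rfl⟩⟩
    | algebraMap r =>
      constructor
      · rw [Matrix.algebraMap_matrix_apply]
        simp
      · rw [Matrix.algebraMap_matrix_apply]
        simp only [if_pos rfl]
        exact Subalgebra.algebraMap_mem _ r
    | add u v hu hv ihu ihv =>
      exact ⟨by rw [Matrix.add_apply, ihu.1, ihv.1, add_zero],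
        by rw [Matrix.add_apply]; exact Subalgebra.add_mem _ ihu.2 ihv.2⟩
    | mul u v hu hv ihu ihv =>
      exact ⟨Stmt16Aux.m10 ihu.1 ihv.1,
        by rw [Stmt16Aux.m11 ihu.1]; exact Subalgebra.mul_mem _ ihu.2 ihv.2⟩
  have hU : ∀ i, a i 1 0 = 0 := fun i => (key _ (ha i)).1
  have hD : ∀ i, a i 1 1 ∈ Algebra.adjoin K (Set.range y) := fun i => (key _ (ha i)).2
  have struct := Stmt16Aux.adjoin_struct od hod y e hdec he
  -- commutators of diagonal entries lie in P * P
  have brPP : ∀ u v : ExteriorAlgebra K V, u ∈ Algebra.adjoin K (Set.range y) →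
      v ∈ Algebra.adjoin K (Set.range y) → br u v ∈ P * P := by
    intro u v hu hv
    obtain ⟨cu, pu, hcu, hpu, rfl⟩ := struct u hu
    obtain ⟨cv, pv, hcv, hpv, rfl⟩ := struct v hv
    have keyb : br (cu + pu) (cv + pv) = pu * pv + pu * pv := by
      show (cu + pu) * (cv + pv) - (cv + pv) * (cu + pu) = _
      rw [mul_add, add_mul, add_mul, mul_add, add_mul, add_mul]
      rw [← hcu cv, ← hcu pv, hcv pu, Stmt16Aux.P_anti od hod hpv hpu]
      abel
    rw [keyb]
    exact Submodule.add_mem _ (Submodule.mul_mem_mul hpu hpv)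
      (Submodule.mul_mem_mul hpu hpv)
  -- entries of the triple commutator
  have hbr10 : br (a 0) (a 1) 1 0 = 0 := Stmt16Aux.br10 (hU 0) (hU 1)
  have hE10 : tr (a 0) (a 1) (a 2) 1 0 = 0 := Stmt16Aux.br10 hbr10 (hU 2)
  have hE00 : tr (a 0) (a 1) (a 2) 0 0 = 0 := by
    show br (br (a 0) (a 1)) (a 2) 0 0 = 0
    rw [Stmt16Aux.br00 hbr10 (hU 2), Stmt16Aux.br00 (hU 0) (hU 1)]
    exact Stmt16Aux.tr_zero _ _ _
  have hE11 : tr (a 0) (a 1) (a 2) 1 1 = 0 := by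
    show br (br (a 0) (a 1)) (a 2) 1 1 = 0
    rw [Stmt16Aux.br11 hbr10 (hU 2), Stmt16Aux.br11 (hU 0) (hU 1)]
    exact Stmt16Aux.tr_zero _ _ _
  -- the list of commutators
  set L : List (Matrix (Fin 2) (Fin 2) (ExteriorAlgebra K V)) :=
    List.ofFn (fun i : Fin (m + 1) => br (a (2 * i + 3)) (a (2 * i + 4))) with hL
  have hLmem : ∀ M ∈ L, M 1 0 = 0 ∧ M 1 1 ∈ P * P := by
    intro M hM
    obtain ⟨i, hi⟩ := List.mem_ofFn.mp hM
    rw [← hi]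
    refine ⟨Stmt16Aux.br10 (hU _) (hU _), ?_⟩
    rw [Stmt16Aux.br11 (hU _) (hU _)]
    exact brPP _ _ (hD _) (hD _)
  have hLfact := Stmt16Aux.matrix_list_prod (P * P) L hLmem
  have hF10 : L.prod 1 0 = 0 := hLfact.1
  have hF11 : L.prod 1 1 = 0 := by
    have h1 : L.prod 1 1 ∈ (P * P) ^ L.length := hLfact.2
    have hlen : L.length = m + 1 := by rw [hL, List.length_ofFn]
    have h2 : (P * P) ^ (m + 1) = P ^ (2 * m + 1 + 1) := by
      have he : 2 * (m + 1) = 2 * m + 1 + 1 := by omega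
      rw [← pow_two, ← pow_mul, he]
    rw [hlen, h2, Stmt16Aux.Ppow_bot od hod] at h1
    exact Submodule.mem_bot K |>.mp h1
  -- conclude by computing all four entries
  ext i j
  rw [Matrix.zero_apply, Matrix.mul_apply, Fin.sum_univ_two]
  fin_cases i <;> fin_cases j <;>
    simp [hE00, hE10, hE11, hF10, hF11]
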